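/- If W* maximizes the unconstrained objective Σ_g ζ_g min_k log(1+γ̂_{gk}(W)) over nonzero W, then W° = √(P_t/Tr(W* W*ᴴ))·W* satisfies Tr(W° W°ᴴ) = P_t and achieves γ_{gk}(W°) = γ̂_{gk}(W*) for all g, k, where γ_{gk}(W) = |h_{gk}ᴴw_g|²/(Σ_{i≠g}|h_{gk}ᴴwᵢ|² + σ_{gk}²); hence W° is optimal for the power-constrained WSR problem. -/

import Mathlib

/-- The modified SINR `γ̂_{gk}(W)` with the power constraint absorbed into the noise. -/
noncomputable def gammaHat {L G : ℕ} {K : Fin G → ℕ}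
    (h : (g : Fin G) → Fin (K g) → (Fin L → ℂ))
    (σsq : (g : Fin G) → Fin (K g) → ℝ) (Pt : ℝ)
    (W : Matrix (Fin L) (Fin G) ℂ) (g : Fin G) (k : Fin (K g)) : ℝ :=
  ‖∑ l, starRingEnd ℂ (h g k l) * W l g‖ ^ 2 /
    ((∑ i, if i = g then 0 else ‖∑ l, starRingEnd ℂ (h g k l) * W l i‖ ^ 2)
      + σsq g k / Pt * ∑ l, ∑ i, ‖W l i‖ ^ 2)

/-- The ordinary SINR `γ_{gk}(W) = |h_{gk}ᴴw_g|²/(Σ_{i≠g}|h_{gk}ᴴwᵢ|² + σ_{gk}²)`. -/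
noncomputable def gammaSINR {L G : ℕ} {K : Fin G → ℕ}
    (h : (g : Fin G) → Fin (K g) → (Fin L → ℂ))
    (σsq : (g : Fin G) → Fin (K g) → ℝ)
    (W : Matrix (Fin L) (Fin G) ℂ) (g : Fin G) (k : Fin (K g)) : ℝ :=
  ‖∑ l, starRingEnd ℂ (h g k l) * W l g‖ ^ 2 /
    ((∑ i, if i = g then 0 else ‖∑ l, starRingEnd ℂ (h g k l) * W l i‖ ^ 2)
      + σsq g k)

/-- Proposition 3: if `W*` maximizes the unconstrained WSR objective built on `γ̂` over
nonzero `W`, then the rescaled `W° = √(P_t/Tr(W*W*ᴴ))·W*` meets the power budget with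
equality, attains `γ_{gk}(W°) = γ̂_{gk}(W*)`, and is optimal for the power-constrained
WSR problem. -/
lemma sq_sum_pos {L G : ℕ} (W : Matrix (Fin L) (Fin G) ℂ) (hW : W ≠ 0) :
    0 < ∑ l, ∑ i, ‖W l i‖ ^ 2 := by
  have : ∃ l i, W l i ≠ 0 := by
    by_contra hc
    push_neg at hc
    exact hW (by ext l i; simpa using hc l i)
  obtain ⟨l, i, hli⟩ := this
  have h1 : 0 < ∑ i, ‖W l i‖ ^ 2 := by
    apply Finset.sum_pos' (fun _ _ => by positivity)
    exact ⟨i, Finset.mem_univ i, pow_pos (norm_pos_iff.mpr hli) 2⟩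
  apply Finset.sum_pos' (fun _ _ => by positivity)
  exact ⟨l, Finset.mem_univ l, h1⟩

lemma scale_frac (N I S Pt σ : ℝ) (hI : 0 ≤ I) (hσ : 0 < σ) (hPt : 0 < Pt) (hS : 0 < S) :
    (Pt / S * N) / (Pt / S * I + σ) = N / (I + σ / Pt * S) := by
  rw [div_eq_div_iff (by positivity) (by positivity)]
  field_simp

lemma interf_nonneg {L G : ℕ} {K : Fin G → ℕ}
    (h : (g : Fin G) → Fin (K g) → (Fin L → ℂ))
    (W : Matrix (Fin L) (Fin G) ℂ) (g : Fin G) (k : Fin (K g)) :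
    0 ≤ ∑ i, if i = g then 0 else ‖∑ l, starRingEnd ℂ (h g k l) * W l i‖ ^ 2 := by
  apply Finset.sum_nonneg
  intro i _
  split <;> positivity

lemma gammaSINR_nonneg {L G : ℕ} {K : Fin G → ℕ}
    (h : (g : Fin G) → Fin (K g) → (Fin L → ℂ))
    (σsq : (g : Fin G) → Fin (K g) → ℝ) (hσ : ∀ g k, 0 < σsq g k)
    (W : Matrix (Fin L) (Fin G) ℂ) (g : Fin G) (k : Fin (K g)) :
    0 ≤ gammaSINR h σsq W g k := by
  apply div_nonneg (by positivity)
  have := interf_nonneg h W g k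
  have := (hσ g k).le
  linarith

set_option maxHeartbeats 1000000 in
theorem unconstrained_to_constrained_WSR {L G : ℕ} {K : Fin G → ℕ}
    (h : (g : Fin G) → Fin (K g) → (Fin L → ℂ))
    (σsq : (g : Fin G) → Fin (K g) → ℝ) (Pt : ℝ) (ζ : Fin G → ℝ)
    (hσ : ∀ g k, 0 < σsq g k) (hPt : 0 < Pt) (hζ : ∀ g, 0 < ζ g)
    (hK : ∀ g, 0 < K g)
    (Wstar : Matrix (Fin L) (Fin G) ℂ) (hWstar : Wstar ≠ 0)
    (hmax : ∀ W : Matrix (Fin L) (Fin G) ℂ, W ≠ 0 →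
      (∑ g, ζ g * ⨅ k : Fin (K g), Real.log (1 + gammaHat h σsq Pt W g k)) ≤
      (∑ g, ζ g * ⨅ k : Fin (K g), Real.log (1 + gammaHat h σsq Pt Wstar g k)))
    (Wo : Matrix (Fin L) (Fin G) ℂ)
    (hWo : Wo = (Real.sqrt (Pt / ∑ l, ∑ i, ‖Wstar l i‖ ^ 2) : ℝ) • Wstar) :
    (∑ l, ∑ i, ‖Wo l i‖ ^ 2) = Pt ∧
    (∀ (g : Fin G) (k : Fin (K g)),
      gammaSINR h σsq Wo g k = gammaHat h σsq Pt Wstar g k) ∧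
    (∀ W : Matrix (Fin L) (Fin G) ℂ, (∑ l, ∑ i, ‖W l i‖ ^ 2) ≤ Pt →
      (∑ g, ζ g * ⨅ k : Fin (K g), Real.log (1 + gammaSINR h σsq W g k)) ≤
      (∑ g, ζ g * ⨅ k : Fin (K g), Real.log (1 + gammaSINR h σsq Wo g k))) := by
  haveI : ∀ g : Fin G, Nonempty (Fin (K g)) := fun g => ⟨⟨0, hK g⟩⟩
  set S : ℝ := ∑ l, ∑ i, ‖Wstar l i‖ ^ 2 with hS
  have hSpos : 0 < S := sq_sum_pos Wstar hWstar
  set r : ℝ := Real.sqrt (Pt / S) with hr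
  have hrpos : 0 < r := Real.sqrt_pos.mpr (div_pos hPt hSpos)
  have hr2 : r ^ 2 = Pt / S := Real.sq_sqrt (div_pos hPt hSpos).le
  -- entries of Wo
  have hWoe : ∀ l i, Wo l i = (r : ℂ) * Wstar l i := by
    intro l i; rw [hWo]; simp [Matrix.smul_apply, Complex.real_smul]
  -- scaling of absolute squares
  have habs : ∀ l i, ‖Wo l i‖ ^ 2 = r ^ 2 * ‖Wstar l i‖ ^ 2 := by
    intro l i
    rw [hWoe, norm_mul, mul_pow, Complex.norm_real, Real.norm_of_nonneg hrpos.le]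
  -- scaling of channel products
  have hch : ∀ (g : Fin G) (k : Fin (K g)) (i : Fin G),
      ‖∑ l, starRingEnd ℂ (h g k l) * Wo l i‖ ^ 2
        = r ^ 2 * ‖∑ l, starRingEnd ℂ (h g k l) * Wstar l i‖ ^ 2 := by
    intro g k i
    have : (∑ l, starRingEnd ℂ (h g k l) * Wo l i)
        = (r : ℂ) * ∑ l, starRingEnd ℂ (h g k l) * Wstar l i := by
      rw [Finset.mul_sum]
      refine Finset.sum_congr rfl fun l _ => ?_
      rw [hWoe]; ring
    rw [this, norm_mul, mul_pow, Complex.norm_real, Real.norm_of_nonneg hrpos.le]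
  -- power of Wo
  have hpow : (∑ l, ∑ i, ‖Wo l i‖ ^ 2) = Pt := by
    have : (∑ l, ∑ i, ‖Wo l i‖ ^ 2) = r ^ 2 * S := by
      rw [hS, Finset.mul_sum]
      refine Finset.sum_congr rfl fun l _ => ?_
      rw [Finset.mul_sum]
      exact Finset.sum_congr rfl fun i _ => habs l i
    rw [this, hr2, div_mul_cancel₀ _ (ne_of_gt hSpos)]
  -- SINR equality
  have hsinr : ∀ (g : Fin G) (k : Fin (K g)),
      gammaSINR h σsq Wo g k = gammaHat h σsq Pt Wstar g k := by
    intro g k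
    unfold gammaSINR gammaHat
    rw [hch g k g]
    have hI : (∑ i, if i = g then 0 else ‖∑ l, starRingEnd ℂ (h g k l) * Wo l i‖ ^ 2)
        = r ^ 2 * ∑ i, if i = g then 0 else
            ‖∑ l, starRingEnd ℂ (h g k l) * Wstar l i‖ ^ 2 := by
      rw [Finset.mul_sum]
      refine Finset.sum_congr rfl fun i _ => ?_
      split
      · simp
      · exact hch g k i
    rw [hI, hr2]
    exact scale_frac _ _ _ _ _ (interf_nonneg h Wstar g k) (hσ g k) hPt hSpos
  refine ⟨hpow, hsinr, ?_⟩
  intro W hWle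
  -- RHS terms are nonneg
  have hinf_nonneg : ∀ g : Fin G,
      0 ≤ ⨅ k : Fin (K g), Real.log (1 + gammaSINR h σsq Wo g k) := by
    intro g
    apply le_ciInf
    intro k
    apply Real.log_nonneg
    have := gammaSINR_nonneg h σsq hσ Wo g k
    linarith
  by_cases hW0 : W = 0
  · subst hW0
    have hL : (∑ g, ζ g * ⨅ k : Fin (K g), Real.log (1 + gammaSINR h σsq 0 g k)) = 0 := by
      refine Finset.sum_eq_zero fun g _ => ?_
      have : ∀ k : Fin (K g), Real.log (1 + gammaSINR h σsq 0 g k) = 0 := by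
        intro k
        unfold gammaSINR
        simp [Matrix.zero_apply]
      rw [funext this]
      simp
    rw [hL]
    exact Finset.sum_nonneg fun g _ => mul_nonneg (hζ g).le (hinf_nonneg g)
  · have hSW : 0 < ∑ l, ∑ i, ‖W l i‖ ^ 2 := sq_sum_pos W hW0
    have step1 : (∑ g, ζ g * ⨅ k : Fin (K g), Real.log (1 + gammaSINR h σsq W g k)) ≤
        (∑ g, ζ g * ⨅ k : Fin (K g), Real.log (1 + gammaHat h σsq Pt W g k)) := by
      refine Finset.sum_le_sum fun g _ => ?_
      refine mul_le_mul_of_nonneg_left ?_ (hζ g).le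
      apply ciInf_mono
      · exact (Set.finite_range _).bddBelow
      · intro k
        apply Real.log_le_log (by
          have := gammaSINR_nonneg h σsq hσ W g k
          linarith)
        have : gammaSINR h σsq W g k ≤ gammaHat h σsq Pt W g k := by
          unfold gammaSINR gammaHat
          have hInn := interf_nonneg h W g k
          have hσp := hσ g k
          have hd1 : 0 < (∑ i, if i = g then 0 else
              ‖∑ l, starRingEnd ℂ (h g k l) * W l i‖ ^ 2)
              + σsq g k / Pt * ∑ l, ∑ i, ‖W l i‖ ^ 2 :=
            add_pos_of_nonneg_of_pos hInn (mul_pos (div_pos hσp hPt) hSW)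
          apply div_le_div_of_nonneg_left (sq_nonneg _) hd1
          have : σsq g k / Pt * (∑ l, ∑ i, ‖W l i‖ ^ 2) ≤ σsq g k := by
            rw [div_mul_eq_mul_div, div_le_iff₀ hPt]
            nlinarith
          linarith
        linarith
    have step2 := hmax W hW0
    have step3 : (∑ g, ζ g * ⨅ k : Fin (K g), Real.log (1 + gammaHat h σsq Pt Wstar g k)) =
        (∑ g, ζ g * ⨅ k : Fin (K g), Real.log (1 + gammaSINR h σsq Wo g k)) := by
      refine Finset.sum_congr rfl fun g _ => ?_
      congr 1
      exact iInf_congr fun k => by rw [hsinr g k]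
    linarith
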